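/- arXiv:1604.04646 — 7 statements merged into one kernel-verified Lean document; each statement's English description precedes it below -/
import Mathlib

section
/- Fix points p₀, p₁, p₂, p₃ ∈ ℝ², a constant k > 0, and δ with 0 < δ < 1/2. Then the functions u ↦ C_ω(u) = (B₀(u)·p₀ + ω·B₁(u)·p₁ + kω·B₂(u)·p₂ + B₃(u)·p₃) / (B₀(u) + ω·B₁(u) + kω·B₂(u) + B₃(u)) converge uniformly on the interval [δ, 1−δ] to the function u ↦ (B₁(u)·p₁ + k·B₂(u)·p₂) / (B₁(u) + k·B₂(u)) as ω → +∞. -/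
open Filter Topology

/-- The cubic Bernstein polynomials `B j u = (3 choose j) u^j (1-u)^(3-j)`. -/
noncomputable def cubicBernstein (j : ℕ) (u : ℝ) : ℝ :=
  (Nat.choose 3 j : ℝ) * u ^ j * (1 - u) ^ (3 - j)

set_option maxHeartbeats 1000000 in
/-- Fix points `p₀, p₁, p₂, p₃ ∈ ℝ²`, `k > 0`, and `0 < δ < 1/2`.  The rational cubic Bézier
curves with weights `(1, ω, kω, 1)` converge uniformly on `[δ, 1-δ]` to
`u ↦ (B₁(u)·p₁ + k·B₂(u)·p₂) / (B₁(u) + k·B₂(u))` as `ω → +∞`. -/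
theorem nurbs_weights_same_order_uniform_convergence
    (p₀ p₁ p₂ p₃ : EuclideanSpace ℝ (Fin 2)) (k : ℝ) (hk : 0 < k)
    (δ : ℝ) (hδ : 0 < δ) (hδ' : δ < 1 / 2) :
    TendstoUniformlyOn
      (fun ω : ℝ => fun u : ℝ =>
        (cubicBernstein 0 u + ω * cubicBernstein 1 u + k * ω * cubicBernstein 2 u +
            cubicBernstein 3 u)⁻¹ •
          ((cubicBernstein 0 u) • p₀ + (ω * cubicBernstein 1 u) • p₁ +
            (k * ω * cubicBernstein 2 u) • p₂ + (cubicBernstein 3 u) • p₃))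
      (fun u : ℝ =>
        (cubicBernstein 1 u + k * cubicBernstein 2 u)⁻¹ •
          ((cubicBernstein 1 u) • p₁ + (k * cubicBernstein 2 u) • p₂))
      atTop (Set.Icc δ (1 - δ)) := by
  rw [Metric.tendstoUniformlyOn_iff]
  intro ε hε
  set c : ℝ := 3 * δ ^ 3 with hc
  have hcpos : 0 < c := by positivity
  set K : ℝ := (3 + 3 * k) * (‖p₀‖ + ‖p₃‖) + 2 * (3 * ‖p₁‖ + 3 * k * ‖p₂‖) with hKdef
  have hK0 : 0 ≤ K := by positivity
  filter_upwards [eventually_ge_atTop (max 1 (K / (c ^ 2 * ε) + 1))] with ω hω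
  intro u hu
  obtain ⟨hul, hur⟩ := hu
  have hu0 : 0 < u := lt_of_lt_of_le hδ hul
  have hu1 : u < 1 := by linarith
  have h1u : δ ≤ 1 - u := by linarith
  have hω1 : (1 : ℝ) ≤ ω := le_trans (le_max_left _ _) hω
  have hωK : K / (c ^ 2 * ε) + 1 ≤ ω := le_trans (le_max_right _ _) hω
  have hω0 : 0 < ω := lt_of_lt_of_le one_pos hω1
  have hb0 : cubicBernstein 0 u = (1 - u) ^ 3 := by simp [cubicBernstein]
  have hb1 : cubicBernstein 1 u = 3 * u * (1 - u) ^ 2 := by simp [cubicBernstein]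
  have hb2 : cubicBernstein 2 u = 3 * u ^ 2 * (1 - u) := by simp [cubicBernstein]
  have hb3 : cubicBernstein 3 u = u ^ 3 := by simp [cubicBernstein]
  rw [hb0, hb1, hb2, hb3]
  set b0 : ℝ := (1 - u) ^ 3 with hb0d
  set b1 : ℝ := 3 * u * (1 - u) ^ 2 with hb1d
  set b2 : ℝ := 3 * u ^ 2 * (1 - u) with hb2d
  set b3 : ℝ := u ^ 3 with hb3d
  set S : ℝ := b1 + k * b2 with hSd
  set D : ℝ := b0 + ω * b1 + k * ω * b2 + b3 with hDd
  have h1u0 : (0:ℝ) < 1 - u := by linarith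
  have hb0n : 0 ≤ b0 := by positivity
  have hb1n : 0 ≤ b1 := by positivity
  have hb2n : 0 ≤ b2 := by positivity
  have hb3n : 0 ≤ b3 := by positivity
  have hsq : (1 - u) ^ 2 ≤ 1 := by nlinarith
  have husq : u ^ 2 ≤ 1 := by nlinarith
  have hb0le : b0 ≤ 1 := by
    rw [hb0d]; exact pow_le_one₀ h1u0.le (by linarith)
  have hb3le : b3 ≤ 1 := by
    rw [hb3d]; exact pow_le_one₀ hu0.le hu1.le
  have hb1le : b1 ≤ 3 := by
    rw [hb1d]
    have h1 : u * (1 - u) ^ 2 ≤ 1 := mul_le_one₀ hu1.le (by positivity) hsq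
    nlinarith [h1]
  have hb2le : b2 ≤ 3 := by
    rw [hb2d]
    have h1 : u ^ 2 * (1 - u) ≤ 1 := mul_le_one₀ husq h1u0.le (by linarith)
    nlinarith [h1]
  have hSlb : c ≤ S := by
    have hd2 : δ ^ 2 ≤ (1 - u) ^ 2 := by nlinarith
    have h1 : 3 * δ ^ 3 ≤ b1 := by
      rw [hb1d]
      have : δ * δ ^ 2 ≤ u * (1 - u) ^ 2 := by nlinarith
      nlinarith
    have h2 : 0 ≤ k * b2 := mul_nonneg hk.le hb2n
    rw [hSd, hc]; linarith
  have hSpos : 0 < S := lt_of_lt_of_le hcpos hSlb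
  have hSub : S ≤ 3 + 3 * k := by
    have h2 : k * b2 ≤ k * 3 := mul_le_mul_of_nonneg_left hb2le hk.le
    rw [hSd]; linarith
  have hDlb : ω * c ≤ D := by
    have : ω * c ≤ ω * S := mul_le_mul_of_nonneg_left hSlb hω0.le
    have h2 : ω * S ≤ ω * b1 + k * ω * b2 := by rw [hSd]; ring_nf; linarith
    rw [hDd]; linarith
  have hDpos : 0 < D := lt_of_lt_of_le (by positivity) hDlb
  set M : EuclideanSpace ℝ (Fin 2) := b1 • p₁ + (k * b2) • p₂ with hMd
  set N : EuclideanSpace ℝ (Fin 2) :=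
    b0 • p₀ + (ω * b1) • p₁ + (k * ω * b2) • p₂ + b3 • p₃ with hNd
  set E : EuclideanSpace ℝ (Fin 2) :=
    (b0 + b3) • M - S • (b0 • p₀ + b3 • p₃) with hEd
  have hkey : S⁻¹ • M - D⁻¹ • N = (D * S)⁻¹ • E := by
    have h1 : E = D • M - S • N := by
      rw [hEd, hMd, hNd, hDd, hSd]; module
    rw [h1, smul_sub, smul_smul, smul_smul]
    congr 2 <;> field_simp <;> ring
  rw [dist_eq_norm, hkey, norm_smul]
  have hEnorm : ‖E‖ ≤ K := by
    have h1 : ‖E‖ ≤ ‖(b0 + b3) • M‖ + ‖S • (b0 • p₀ + b3 • p₃)‖ := norm_sub_le _ _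
    have h2 : ‖(b0 + b3) • M‖ ≤ 2 * (3 * ‖p₁‖ + 3 * k * ‖p₂‖) := by
      rw [norm_smul]
      have hM : ‖M‖ ≤ 3 * ‖p₁‖ + 3 * k * ‖p₂‖ := by
        calc ‖M‖ ≤ ‖b1 • p₁‖ + ‖(k * b2) • p₂‖ := norm_add_le _ _
        _ = b1 * ‖p₁‖ + (k * b2) * ‖p₂‖ := by
            rw [norm_smul, norm_smul, Real.norm_eq_abs, Real.norm_eq_abs,
              abs_of_nonneg hb1n, abs_of_nonneg (mul_nonneg hk.le hb2n)]
        _ ≤ 3 * ‖p₁‖ + 3 * k * ‖p₂‖ := by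
            have h1' := mul_le_mul_of_nonneg_right hb1le (norm_nonneg p₁)
            have h2' : k * b2 * ‖p₂‖ ≤ k * 3 * ‖p₂‖ :=
              mul_le_mul_of_nonneg_right
                (mul_le_mul_of_nonneg_left hb2le hk.le) (norm_nonneg p₂)
            have h3' : k * 3 * ‖p₂‖ = 3 * k * ‖p₂‖ := by ring
            linarith
      have hab : ‖(b0 + b3 : ℝ)‖ ≤ 2 := by
        rw [Real.norm_eq_abs, abs_of_nonneg (by linarith)]; linarith
      have := mul_le_mul hab hM (norm_nonneg M) (by norm_num)
      linarith
    have h3 : ‖S • (b0 • p₀ + b3 • p₃)‖ ≤ (3 + 3 * k) * (‖p₀‖ + ‖p₃‖) := by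
      rw [norm_smul]
      have hP : ‖b0 • p₀ + b3 • p₃‖ ≤ ‖p₀‖ + ‖p₃‖ := by
        calc ‖b0 • p₀ + b3 • p₃‖ ≤ ‖b0 • p₀‖ + ‖b3 • p₃‖ := norm_add_le _ _
        _ = b0 * ‖p₀‖ + b3 * ‖p₃‖ := by
            rw [norm_smul, norm_smul, Real.norm_eq_abs, Real.norm_eq_abs,
              abs_of_nonneg hb0n, abs_of_nonneg hb3n]
        _ ≤ ‖p₀‖ + ‖p₃‖ := by
            have h1' := mul_le_mul_of_nonneg_right hb0le (norm_nonneg p₀)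
            have h2' := mul_le_mul_of_nonneg_right hb3le (norm_nonneg p₃)
            linarith [one_mul ‖p₀‖ ▸ h1', one_mul ‖p₃‖ ▸ h2']
      have hSn : ‖S‖ ≤ 3 + 3 * k := by
        rw [Real.norm_eq_abs, abs_of_nonneg hSpos.le]; exact hSub
      have := mul_le_mul hSn hP (norm_nonneg _) (by positivity)
      linarith
    rw [hKdef]; linarith
  have hDS : ‖(D * S)⁻¹‖ = (D * S)⁻¹ := by
    rw [Real.norm_eq_abs, abs_of_nonneg (by positivity)]
  rw [hDS]
  have hDSpos : 0 < D * S := by positivity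
  have hcc : ω * c * c ≤ D * S := by
    have h := mul_le_mul hDlb hSlb hcpos.le hDpos.le
    calc ω * c * c = ω * c * c := rfl
    _ ≤ D * S := h
  have hωcc : 0 < ω * c * c := by positivity
  have hfinal : (D * S)⁻¹ * ‖E‖ ≤ K / (ω * c * c) := by
    have h1 : (D * S)⁻¹ ≤ (ω * c * c)⁻¹ := by
      exact inv_anti₀ hωcc hcc
    calc (D * S)⁻¹ * ‖E‖ ≤ (ω * c * c)⁻¹ * K := by
          exact mul_le_mul h1 hEnorm (norm_nonneg _) (by positivity)
    _ = K / (ω * c * c) := by rw [div_eq_inv_mul]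
  have hlast : K / (ω * c * c) < ε := by
    rw [div_lt_iff₀ hωcc]
    have hωgt : K / (c ^ 2 * ε) < ω := by linarith
    have h2 : K < ω * (c ^ 2 * ε) := by
      rw [div_lt_iff₀ (by positivity)] at hωgt; linarith
    have h3 : ω * (c ^ 2 * ε) = ε * (ω * c * c) := by ring
    linarith
  linarith
end

section
/- Fix u ∈ (0,1) and points p₀, p₁, p₂, p₃ ∈ ℝ² with p₁ ≠ p₂. Then the two-variable function f(ω₁, ω₂) = (B₀(u)·p₀ + ω₁·B₁(u)·p₁ + ω₂·B₂(u)·p₂ + B₃(u)·p₃) / (B₀(u) + ω₁·B₁(u) + ω₂·B₂(u) + B₃(u)) has no limit as (ω₁, ω₂) → (+∞, +∞): there is no point L ∈ ℝ² such that f tends to L along the product filter atTop ×ˢ atTop on ℝ × ℝ. -/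
open Filter Topology

/-- Fix `u ∈ (0,1)` and points `p₀, p₁, p₂, p₃ ∈ ℝ²` with `p₁ ≠ p₂`.  The two-variable function
`f(ω₁, ω₂) = (B₀(u)·p₀ + ω₁·B₁(u)·p₁ + ω₂·B₂(u)·p₂ + B₃(u)·p₃) /
(B₀(u) + ω₁·B₁(u) + ω₂·B₂(u) + B₃(u))` has no limit as `(ω₁, ω₂) → (+∞, +∞)` along the
product filter `atTop ×ˢ atTop`. -/
theorem nurbs_no_limit_two_independent_weights
    (u : ℝ) (hu : u ∈ Set.Ioo (0 : ℝ) 1)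
    (p₀ p₁ p₂ p₃ : EuclideanSpace ℝ (Fin 2)) (hp : p₁ ≠ p₂) :
    ¬ ∃ L : EuclideanSpace ℝ (Fin 2),
      Tendsto
        (fun w : ℝ × ℝ =>
          (cubicBernstein 0 u + w.1 * cubicBernstein 1 u + w.2 * cubicBernstein 2 u +
              cubicBernstein 3 u)⁻¹ •
            ((cubicBernstein 0 u) • p₀ + (w.1 * cubicBernstein 1 u) • p₁ +
              (w.2 * cubicBernstein 2 u) • p₂ + (cubicBernstein 3 u) • p₃))
        (atTop ×ˢ atTop) (𝓝 L) := by
  obtain ⟨hu0, hu1⟩ := hu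
  set c₀ := cubicBernstein 0 u
  set B₁ := cubicBernstein 1 u
  set B₂ := cubicBernstein 2 u
  set c₃ := cubicBernstein 3 u
  have h1u : (0:ℝ) < 1 - u := by linarith
  have hB₁ : 0 < B₁ := by
    show (0:ℝ) < (Nat.choose 3 1 : ℝ) * u ^ 1 * (1-u) ^ (3-1)
    have := mul_pos (mul_pos (by norm_num : (0:ℝ) < (Nat.choose 3 1 : ℝ))
      (pow_pos hu0 1)) (pow_pos h1u (3-1))
    exact this
  have hB₂ : 0 < B₂ := by
    show (0:ℝ) < (Nat.choose 3 2 : ℝ) * u ^ 2 * (1-u) ^ (3-2)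
    exact mul_pos (mul_pos (by norm_num) (pow_pos hu0 2)) (pow_pos h1u (3-2))
  rintro ⟨L, hL⟩
  set f : ℝ × ℝ → EuclideanSpace ℝ (Fin 2) := fun w =>
    (c₀ + w.1 * B₁ + w.2 * B₂ + c₃)⁻¹ •
      (c₀ • p₀ + (w.1 * B₁) • p₁ + (w.2 * B₂) • p₂ + c₃ • p₃) with hf
  -- limit of t⁻¹
  have hinv : Tendsto (fun t : ℝ => t⁻¹) atTop (𝓝 0) := tendsto_inv_atTop_zero
  -- Path 1: (t, t)
  have hpath1 : Tendsto (fun t : ℝ => (t, t)) atTop (atTop ×ˢ atTop) :=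
    tendsto_id.prodMk tendsto_id
  have hlim1 : Tendsto (fun t : ℝ => f (t, t)) atTop
      (𝓝 ((B₁ + B₂)⁻¹ • (B₁ • p₁ + B₂ • p₂))) := by
    have hα : Tendsto (fun t : ℝ => (c₀ + c₃) * t⁻¹ + (B₁ + B₂)) atTop (𝓝 (B₁ + B₂)) := by
      have := (hinv.const_mul (c₀ + c₃)).add_const (B₁ + B₂)
      simpa using this
    have hV : Tendsto (fun t : ℝ =>
        t⁻¹ • (c₀ • p₀) + B₁ • p₁ + B₂ • p₂ + t⁻¹ • (c₃ • p₃)) atTop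
        (𝓝 (B₁ • p₁ + B₂ • p₂)) := by
      have h0 : Tendsto (fun t : ℝ => t⁻¹ • (c₀ • p₀)) atTop (𝓝 (0:EuclideanSpace ℝ (Fin 2))) := by
        simpa using hinv.smul_const (c₀ • p₀)
      have h3 : Tendsto (fun t : ℝ => t⁻¹ • (c₃ • p₃)) atTop (𝓝 (0:EuclideanSpace ℝ (Fin 2))) := by
        simpa using hinv.smul_const (c₃ • p₃)
      have := ((h0.add_const (B₁ • p₁)).add_const (B₂ • p₂)).add h3
      simpa using this
    have hmain := (hα.inv₀ (by positivity)).smul hV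
    refine Tendsto.congr' ?_ hmain
    filter_upwards [eventually_gt_atTop (0:ℝ)] with t ht
    have htne : t ≠ 0 := ne_of_gt ht
    show ((c₀ + c₃) * t⁻¹ + (B₁ + B₂))⁻¹ •
        (t⁻¹ • (c₀ • p₀) + B₁ • p₁ + B₂ • p₂ + t⁻¹ • (c₃ • p₃)) = f (t, t)
    rw [hf]
    simp only
    symm
    rw [show c₀ + t * B₁ + t * B₂ + c₃ = t * ((c₀ + c₃) * t⁻¹ + (B₁ + B₂)) by
      field_simp; ring]
    rw [mul_inv, mul_smul, smul_comm]
    congr 1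
    match_scalars <;> field_simp
  -- Path 2: (t, t^2)
  have hpath2 : Tendsto (fun t : ℝ => (t, t * t)) atTop (atTop ×ˢ atTop) :=
    tendsto_id.prodMk (tendsto_id.atTop_mul_atTop₀ tendsto_id)
  have hlim2 : Tendsto (fun t : ℝ => f (t, t * t)) atTop (𝓝 p₂) := by
    have hα : Tendsto (fun t : ℝ => (c₀ + c₃) * (t⁻¹ * t⁻¹) + B₁ * t⁻¹ + B₂) atTop (𝓝 B₂) := by
      have := (((hinv.mul hinv).const_mul (c₀ + c₃)).add ((hinv.const_mul B₁))).add_const B₂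
      simpa using this
    have hV : Tendsto (fun t : ℝ =>
        (t⁻¹ * t⁻¹) • (c₀ • p₀) + (B₁ * t⁻¹) • p₁ + B₂ • p₂ + (t⁻¹ * t⁻¹) • (c₃ • p₃)) atTop
        (𝓝 (B₂ • p₂)) := by
      have h0 : Tendsto (fun t : ℝ => (t⁻¹ * t⁻¹) • (c₀ • p₀)) atTop
          (𝓝 (0:EuclideanSpace ℝ (Fin 2))) := by
        simpa using (hinv.mul hinv).smul_const (c₀ • p₀)
      have h1 : Tendsto (fun t : ℝ => (B₁ * t⁻¹) • p₁) atTop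
          (𝓝 (0:EuclideanSpace ℝ (Fin 2))) := by
        simpa using (hinv.const_mul B₁).smul_const p₁
      have h3 : Tendsto (fun t : ℝ => (t⁻¹ * t⁻¹) • (c₃ • p₃)) atTop
          (𝓝 (0:EuclideanSpace ℝ (Fin 2))) := by
        simpa using (hinv.mul hinv).smul_const (c₃ • p₃)
      have := (((h0.add h1)).add_const (B₂ • p₂)).add h3
      simpa using this
    have hmain := (hα.inv₀ (ne_of_gt hB₂)).smul hV
    have : B₂⁻¹ • (B₂ • p₂) = p₂ := inv_smul_smul₀ (ne_of_gt hB₂) p₂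
    rw [this] at hmain
    refine Tendsto.congr' ?_ hmain
    filter_upwards [eventually_gt_atTop (0:ℝ)] with t ht
    have htne : t ≠ 0 := ne_of_gt ht
    show ((c₀ + c₃) * (t⁻¹ * t⁻¹) + B₁ * t⁻¹ + B₂)⁻¹ •
        ((t⁻¹ * t⁻¹) • (c₀ • p₀) + (B₁ * t⁻¹) • p₁ + B₂ • p₂ + (t⁻¹ * t⁻¹) • (c₃ • p₃))
        = f (t, t * t)
    rw [hf]
    simp only
    symm
    rw [show c₀ + t * B₁ + t * t * B₂ + c₃
        = (t * t) * ((c₀ + c₃) * (t⁻¹ * t⁻¹) + B₁ * t⁻¹ + B₂) by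
      field_simp; ring]
    rw [mul_inv, mul_smul, smul_comm]
    congr 1
    match_scalars <;> field_simp <;> ring
  have e1 : L = (B₁ + B₂)⁻¹ • (B₁ • p₁ + B₂ • p₂) :=
    tendsto_nhds_unique (hL.comp hpath1) hlim1
  have e2 : L = p₂ := tendsto_nhds_unique (hL.comp hpath2) hlim2
  have hW : B₁ • p₁ + B₂ • p₂ = (B₁ + B₂) • p₂ := by
    have : (B₁ + B₂) • ((B₁ + B₂)⁻¹ • (B₁ • p₁ + B₂ • p₂)) = (B₁ + B₂) • p₂ := by
      rw [← e1, e2]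
    rwa [smul_inv_smul₀ (by positivity)] at this
  have : B₁ • p₁ = B₁ • p₂ := by
    rw [add_smul] at hW
    exact add_right_cancel hW
  exact hp (smul_right_injective _ (ne_of_gt hB₁) this)
end

section
/- Let s be a finite index set, k ∈ s, a < b real numbers, and for each j ∈ s let N_j : ℝ → ℝ be continuous on [a,b] with N_j(u) ≥ 0 for all u ∈ [a,b], and suppose N_k(u) > 0 for all u ∈ [a,b]. Fix positive weights ω_j > 0 for j ∈ s, j ≠ k. Then the rational basis functions u ↦ R_k^ω(u) = N_k(u)·ω / (N_k(u)·ω + Σ_{j ∈ s, j ≠ k} N_j(u)·ω_j) converge uniformly on [a,b] to the constant function 1 as ω → +∞. -/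
open Filter Topology

/-- Let `s` be a finite index set, `k ∈ s`, `a < b`, and for each `j ∈ s` let `N j` be continuous
and nonnegative on `[a,b]`, with `N k` strictly positive on `[a,b]`.  For fixed positive weights
`ω j` (`j ≠ k`), the rational basis functions
`u ↦ N k u · ω / (N k u · ω + Σ_{j ∈ s, j ≠ k} N j u · ω j)` converge uniformly on `[a,b]`
to the constant function `1` as `ω → +∞`. -/
theorem rational_basis_tendstoUniformly_one {ι : Type*} [DecidableEq ι]
    (s : Finset ι) (k : ι) (hk : k ∈ s) (a b : ℝ) (hab : a < b)
    (N : ι → ℝ → ℝ)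
    (hNcont : ∀ j ∈ s, ContinuousOn (N j) (Set.Icc a b))
    (hNnonneg : ∀ j ∈ s, ∀ u ∈ Set.Icc a b, 0 ≤ N j u)
    (hNk : ∀ u ∈ Set.Icc a b, 0 < N k u)
    (ω : ι → ℝ) (hω : ∀ j ∈ s, j ≠ k → 0 < ω j) :
    TendstoUniformlyOn
      (fun w : ℝ => fun u : ℝ =>
        N k u * w / (N k u * w + ∑ j ∈ s.erase k, N j u * ω j))
      (fun _ : ℝ => (1 : ℝ)) atTop (Set.Icc a b) := by
  set S : ℝ → ℝ := fun u => ∑ j ∈ s.erase k, N j u * ω j with hS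
  obtain ⟨u₀, hu₀, hmin⟩ :=
    isCompact_Icc.exists_isMinOn (Set.nonempty_Icc.2 hab.le) (hNcont k hk)
  set m := N k u₀ with hm
  have hm0 : 0 < m := hNk u₀ hu₀
  have hScont : ContinuousOn S (Set.Icc a b) := by
    apply continuousOn_finset_sum
    intro j hj
    exact (hNcont j (Finset.mem_of_mem_erase hj)).mul continuousOn_const
  obtain ⟨u₁, hu₁, hmax⟩ :=
    isCompact_Icc.exists_isMaxOn (Set.nonempty_Icc.2 hab.le) hScont
  set M := S u₁ with hM
  have hSnn : ∀ u ∈ Set.Icc a b, 0 ≤ S u := by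
    intro u hu
    apply Finset.sum_nonneg
    intro j hj
    exact mul_nonneg (hNnonneg j (Finset.mem_of_mem_erase hj) u hu)
      (hω j (Finset.mem_of_mem_erase hj) (Finset.ne_of_mem_erase hj)).le
  have hM0 : 0 ≤ M := hSnn u₁ hu₁
  rw [Metric.tendstoUniformlyOn_iff]
  intro ε hε
  filter_upwards [eventually_gt_atTop (max 0 (M / (m * ε)))] with w hw u hu
  have hw0 : 0 < w := lt_of_le_of_lt (le_max_left _ _) hw
  have hwM : M / (m * ε) < w := lt_of_le_of_lt (le_max_right _ _) hw
  have hNku : 0 < N k u := hNk u hu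
  have hSu : 0 ≤ S u := hSnn u hu
  have hden : 0 < N k u * w + S u := by positivity
  have h1 : (1 : ℝ) - N k u * w / (N k u * w + S u) = S u / (N k u * w + S u) := by
    field_simp
    ring
  rw [Real.dist_eq, h1, abs_of_nonneg (div_nonneg hSu hden.le)]
  have hmw : m * w ≤ N k u * w + S u := by
    have : m ≤ N k u := hmin hu
    nlinarith
  calc S u / (N k u * w + S u) ≤ M / (m * w) := by
        apply div_le_div₀ hM0 (hmax hu) (by positivity) hmw
    _ < ε := by
        rw [div_lt_iff₀ (by positivity)]
        have := (div_lt_iff₀ (by positivity : 0 < m * ε)).mp hwM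
        nlinarith
end

section
/- Let s be a finite index set, k ∈ s, a < b real numbers, and for each j ∈ s let N_j : ℝ → ℝ be continuous on [a,b] with N_j(u) ≥ 0 for all u ∈ [a,b], and suppose N_k(u) > 0 for all u ∈ [a,b]. Fix control points p_j ∈ ℝ² for j ∈ s and positive weights ω_j > 0 for j ≠ k. Then the curves u ↦ C_ω(u) = (N_k(u)·ω·p_k + Σ_{j ≠ k} N_j(u)·ω_j·p_j) / (N_k(u)·ω + Σ_{j ≠ k} N_j(u)·ω_j) converge uniformly on [a,b] to the constant function u ↦ p_k as ω → +∞. -/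
open Filter Topology

/-- Let `s` be a finite index set, `k ∈ s`, `a < b`, and for each `j ∈ s` let `N j` be continuous
and nonnegative on `[a,b]`, with `N k` strictly positive on `[a,b]`.  For control points
`p j ∈ ℝ²` and fixed positive weights `ω j` (`j ≠ k`), the curves
`u ↦ (N k u · ω · p k + Σ_{j ≠ k} N j u · ω j · p j) / (N k u · ω + Σ_{j ≠ k} N j u · ω j)`
converge uniformly on `[a,b]` to the constant function `u ↦ p k` as `ω → +∞`. -/
theorem nurbs_one_weight_to_infinity_tendstoUniformly_control_point {ι : Type*} [DecidableEq ι]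
    (s : Finset ι) (k : ι) (hk : k ∈ s) (a b : ℝ) (hab : a < b)
    (N : ι → ℝ → ℝ)
    (hNcont : ∀ j ∈ s, ContinuousOn (N j) (Set.Icc a b))
    (hNnonneg : ∀ j ∈ s, ∀ u ∈ Set.Icc a b, 0 ≤ N j u)
    (hNk : ∀ u ∈ Set.Icc a b, 0 < N k u)
    (p : ι → EuclideanSpace ℝ (Fin 2))
    (ω : ι → ℝ) (hω : ∀ j ∈ s, j ≠ k → 0 < ω j) :
    TendstoUniformlyOn
      (fun w : ℝ => fun u : ℝ =>
        (N k u * w + ∑ j ∈ s.erase k, N j u * ω j)⁻¹ •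
          ((N k u * w) • p k + ∑ j ∈ s.erase k, (N j u * ω j) • p j))
      (fun _ : ℝ => p k) atTop (Set.Icc a b) := by
  have hcomp : IsCompact (Set.Icc a b) := isCompact_Icc
  have hne : (Set.Icc a b).Nonempty := Set.nonempty_Icc.2 hab.le
  obtain ⟨u0, hu0, hmin⟩ := hcomp.exists_isMinOn hne (hNcont k hk)
  set m := N k u0 with hm
  have hm0 : 0 < m := hNk u0 hu0
  set g : ℝ → ℝ := fun u => ∑ j ∈ s.erase k, N j u * ω j * ‖p k - p j‖ with hg
  have hgcont : ContinuousOn g (Set.Icc a b) := by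
    apply continuousOn_finset_sum
    intro j hj
    exact ((hNcont j (Finset.mem_of_mem_erase hj)).mul continuousOn_const).mul
      continuousOn_const
  obtain ⟨u1, hu1, hmax⟩ := hcomp.exists_isMaxOn hne hgcont
  set K := g u1 with hK
  have hK0 : 0 ≤ K := by
    refine Finset.sum_nonneg fun j hj => ?_
    exact mul_nonneg (mul_nonneg (hNnonneg j (Finset.mem_of_mem_erase hj) u1 hu1)
      (hω j (Finset.mem_of_mem_erase hj) (Finset.ne_of_mem_erase hj)).le) (norm_nonneg _)
  rw [Metric.tendstoUniformlyOn_iff]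
  intro ε hε
  filter_upwards [eventually_gt_atTop (max 0 (K / (m * ε)))] with w hw u hu
  have hw0 : 0 < w := lt_of_le_of_lt (le_max_left _ _) hw
  have hwK : K / (m * ε) < w := lt_of_le_of_lt (le_max_right _ _) hw
  set S := ∑ j ∈ s.erase k, N j u * ω j with hS
  have hSnn : 0 ≤ S := by
    refine Finset.sum_nonneg fun j hj => ?_
    exact mul_nonneg (hNnonneg j (Finset.mem_of_mem_erase hj) u hu)
      (hω j (Finset.mem_of_mem_erase hj) (Finset.ne_of_mem_erase hj)).le
  set D := N k u * w + S with hD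
  have hDm : m * w ≤ D := by
    have : m * w ≤ N k u * w := mul_le_mul_of_nonneg_right (hmin hu) hw0.le
    linarith
  have hD0 : 0 < D := lt_of_lt_of_le (mul_pos hm0 hw0) hDm
  have key : (p k : EuclideanSpace ℝ (Fin 2)) -
      D⁻¹ • ((N k u * w) • p k + ∑ j ∈ s.erase k, (N j u * ω j) • p j) =
      D⁻¹ • ∑ j ∈ s.erase k, (N j u * ω j) • (p k - p j) := by
    have h1 : ∑ j ∈ s.erase k, (N j u * ω j) • (p k - p j) =
        D • p k - ((N k u * w) • p k + ∑ j ∈ s.erase k, (N j u * ω j) • p j) := by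
      rw [hD, hS, add_smul, Finset.sum_smul]
      simp only [smul_sub]
      rw [Finset.sum_sub_distrib]
      abel
    rw [h1, smul_sub, smul_smul, inv_mul_cancel₀ hD0.ne', one_smul]
  rw [dist_eq_norm, key, norm_smul, Real.norm_eq_abs, abs_of_pos (inv_pos.2 hD0)]
  have hV : ‖∑ j ∈ s.erase k, (N j u * ω j) • (p k - p j)‖ ≤ K := by
    calc ‖∑ j ∈ s.erase k, (N j u * ω j) • (p k - p j)‖
        ≤ ∑ j ∈ s.erase k, ‖(N j u * ω j) • (p k - p j)‖ := norm_sum_le _ _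
      _ = g u := by
          refine Finset.sum_congr rfl fun j hj => ?_
          rw [norm_smul, Real.norm_eq_abs, abs_of_nonneg
            (mul_nonneg (hNnonneg j (Finset.mem_of_mem_erase hj) u hu)
              (hω j (Finset.mem_of_mem_erase hj) (Finset.ne_of_mem_erase hj)).le)]
      _ ≤ K := hmax hu
  have h2 : D⁻¹ * ‖∑ j ∈ s.erase k, (N j u * ω j) • (p k - p j)‖ ≤ D⁻¹ * K :=
    mul_le_mul_of_nonneg_left hV (inv_pos.2 hD0).le
  have h3 : D⁻¹ * K ≤ (m * w)⁻¹ * K :=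
    mul_le_mul_of_nonneg_right (inv_anti₀ (mul_pos hm0 hw0) hDm) hK0
  have h4 : (m * w)⁻¹ * K < ε := by
    rw [inv_mul_lt_iff₀ (mul_pos hm0 hw0)]
    have := (div_lt_iff₀ (mul_pos hm0 hε)).1 hwK
    nlinarith
  linarith
end

section
/- Let s be a finite index set, J₀ ⊆ s a nonempty subset, a < b real numbers, and for each j ∈ s let N_j : ℝ → ℝ be continuous on [a,b] with N_j(u) ≥ 0 for all u ∈ [a,b]. Fix constants k_j > 0 for j ∈ J₀, fixed weights ω_j > 0 for j ∉ J₀, and control points p_j ∈ ℝ². Assume Σ_{j ∈ J₀} k_j·N_j(u) > 0 for all u ∈ [a,b]. For t > 0 define C_t(u) = (Σ_{j ∈ J₀} N_j(u)·k_j t·p_j + Σ_{j ∉ J₀} N_j(u)·ω_j·p_j) / (Σ_{j ∈ J₀} N_j(u)·k_j t + Σ_{j ∉ J₀} N_j(u)·ω_j). Then C_t converges uniformly on [a,b], as t → +∞, to the function u ↦ (Σ_{j ∈ J₀} k_j·N_j(u)·p_j) / (Σ_{j ∈ J₀} k_j·N_j(u)). -/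
open Filter Topology

/-- Let `s` be a finite index set, `J₀ ⊆ s` a nonempty subset, `a < b`, and for each `j ∈ s` let
`N j` be continuous and nonnegative on `[a,b]`.  Fix constants `k j > 0` for `j ∈ J₀`, fixed
weights `ω j > 0` for `j ∈ s \ J₀`, and control points `p j ∈ ℝ²`, and assume
`Σ_{j ∈ J₀} k j · N j u > 0` on `[a,b]`.  Then the curves
`C_t(u) = (Σ_{j ∈ J₀} N j u · (k j · t) · p j + Σ_{j ∉ J₀} N j u · ω j · p j) /
(Σ_{j ∈ J₀} N j u · (k j · t) + Σ_{j ∉ J₀} N j u · ω j)` converge uniformly on `[a,b]`, as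
`t → +∞`, to `u ↦ (Σ_{j ∈ J₀} k j · N j u · p j) / (Σ_{j ∈ J₀} k j · N j u)`. -/
theorem nurbs_dominant_weights_tendstoUniformly {ι : Type*} [DecidableEq ι]
    (s J₀ : Finset ι) (hJ₀s : J₀ ⊆ s) (hJ₀ : J₀.Nonempty)
    (a b : ℝ) (hab : a < b)
    (N : ι → ℝ → ℝ)
    (hNcont : ∀ j ∈ s, ContinuousOn (N j) (Set.Icc a b))
    (hNnonneg : ∀ j ∈ s, ∀ u ∈ Set.Icc a b, 0 ≤ N j u)
    (k : ι → ℝ) (hkpos : ∀ j ∈ J₀, 0 < k j)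
    (ω : ι → ℝ) (hωpos : ∀ j ∈ s \ J₀, 0 < ω j)
    (p : ι → EuclideanSpace ℝ (Fin 2))
    (hden : ∀ u ∈ Set.Icc a b, 0 < ∑ j ∈ J₀, k j * N j u) :
    TendstoUniformlyOn
      (fun t : ℝ => fun u : ℝ =>
        ((∑ j ∈ J₀, N j u * (k j * t)) + ∑ j ∈ s \ J₀, N j u * ω j)⁻¹ •
          ((∑ j ∈ J₀, (N j u * (k j * t)) • p j) + ∑ j ∈ s \ J₀, (N j u * ω j) • p j))
      (fun u : ℝ =>
        (∑ j ∈ J₀, k j * N j u)⁻¹ • ∑ j ∈ J₀, (k j * N j u) • p j)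
      atTop (Set.Icc a b) := by
  classical
  set D : ℝ → ℝ := fun u => ∑ j ∈ J₀, k j * N j u with hDdef
  set E : ℝ → ℝ := fun u => ∑ j ∈ s \ J₀, N j u * ω j with hEdef
  set A : ℝ → EuclideanSpace ℝ (Fin 2) := fun u => ∑ j ∈ J₀, (k j * N j u) • p j with hAdef
  set B : ℝ → EuclideanSpace ℝ (Fin 2) := fun u => ∑ j ∈ s \ J₀, (N j u * ω j) • p j with hBdef
  have hIcc : (Set.Icc a b).Nonempty := Set.nonempty_Icc.mpr hab.le
  have hDc : ContinuousOn D (Set.Icc a b) := by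
    rw [hDdef]
    exact continuousOn_finset_sum _ fun j hj => continuousOn_const.mul (hNcont j (hJ₀s hj))
  have hEc : ContinuousOn E (Set.Icc a b) := by
    rw [hEdef]
    exact continuousOn_finset_sum _ fun j hj =>
      (hNcont j (Finset.sdiff_subset hj)).mul continuousOn_const
  have hAc : ContinuousOn A (Set.Icc a b) := by
    rw [hAdef]
    exact continuousOn_finset_sum _ fun j hj =>
      (continuousOn_const.mul (hNcont j (hJ₀s hj))).smul continuousOn_const
  have hBc : ContinuousOn B (Set.Icc a b) := by
    rw [hBdef]
    exact continuousOn_finset_sum _ fun j hj =>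
      ((hNcont j (Finset.sdiff_subset hj)).mul continuousOn_const).smul continuousOn_const
  have hEnn : ∀ u ∈ Set.Icc a b, 0 ≤ E u := fun u hu =>
    Finset.sum_nonneg fun j hj =>
      mul_nonneg (hNnonneg j (Finset.sdiff_subset hj) u hu) (hωpos j hj).le
  obtain ⟨u₀, hu₀, hmin⟩ := isCompact_Icc.exists_isMinOn hIcc hDc
  set δ := D u₀ with hδdef
  have hδ : 0 < δ := hden u₀ hu₀
  have hGc : ContinuousOn (fun u => ‖E u • A u - D u • B u‖) (Set.Icc a b) :=
    ((hEc.smul hAc).sub (hDc.smul hBc)).norm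
  obtain ⟨u₁, hu₁, hmax⟩ := isCompact_Icc.exists_isMaxOn hIcc hGc
  set M := ‖E u₁ • A u₁ - D u₁ • B u₁‖ with hMdef
  have hM0 : 0 ≤ M := norm_nonneg _
  rw [Metric.tendstoUniformlyOn_iff]
  intro ε hε
  filter_upwards [Filter.eventually_ge_atTop (M / (δ ^ 2 * ε) + 1)] with t ht u hu
  have ht1 : (1 : ℝ) ≤ t := le_trans (le_add_of_nonneg_left (by positivity)) ht
  have ht0 : (0 : ℝ) < t := lt_of_lt_of_le one_pos ht1
  have hDu : δ ≤ D u := hmin hu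
  have hDpos : 0 < D u := lt_of_lt_of_le hδ hDu
  have hEu : 0 ≤ E u := hEnn u hu
  have hdenpos : 0 < t * D u + E u := by positivity
  have hs1 : (∑ j ∈ J₀, N j u * (k j * t)) = t * D u := by
    simp only [hDdef, Finset.mul_sum]
    exact Finset.sum_congr rfl fun j _ => by ring
  have hs2 : (∑ j ∈ J₀, (N j u * (k j * t)) • p j) = t • A u := by
    simp only [hAdef, Finset.smul_sum]
    refine Finset.sum_congr rfl fun j _ => ?_
    rw [smul_smul]
    congr 1
    ring
  rw [dist_eq_norm, hs1, hs2]
  show ‖(D u)⁻¹ • A u - (t * D u + E u)⁻¹ • (t • A u + B u)‖ < ε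
  have hkey : (D u)⁻¹ • A u - (t * D u + E u)⁻¹ • (t • A u + B u)
      = ((t * D u + E u) * D u)⁻¹ • (E u • A u - D u • B u) := by
    have h1 : D u ≠ 0 := hDpos.ne'
    have h2 : t * D u + E u ≠ 0 := hdenpos.ne'
    match_scalars
    · field_simp
      ring
    · field_simp
  rw [hkey, norm_smul, Real.norm_eq_abs, abs_inv, abs_of_pos (by positivity)]
  have hnorm : ‖E u • A u - D u • B u‖ ≤ M := hmax hu
  have hb1 : t * δ ^ 2 ≤ (t * D u + E u) * D u := by
    nlinarith [mul_le_mul_of_nonneg_left (mul_le_mul hDu hDu hδ.le hDpos.le) ht0.le,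
      mul_nonneg hEu hDpos.le]
  calc ((t * D u + E u) * D u)⁻¹ * ‖E u • A u - D u • B u‖
      ≤ (t * δ ^ 2)⁻¹ * M := by
        exact mul_le_mul (inv_anti₀ (by positivity) hb1) hnorm (norm_nonneg _)
          (by positivity)
    _ < ε := by
        rw [inv_mul_lt_iff₀ (by positivity)]
        have hc : M / (δ ^ 2 * ε) * (δ ^ 2 * ε) = M := div_mul_cancel₀ M (by positivity)
        nlinarith [mul_le_mul_of_nonneg_right ht (le_of_lt (show (0:ℝ) < δ ^ 2 * ε by positivity)), (show (0:ℝ) < δ ^ 2 * ε by positivity)]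
end

section
/- Fix points p₀, p₁, p₂, p₃ ∈ ℝ² and a constant k > 0. For ω > 0 define C_ω(u) = (B₀(u)·p₀ + ω·B₁(u)·p₁ + kω²·B₂(u)·p₂ + B₃(u)·p₃) / (B₀(u) + ω·B₁(u) + kω²·B₂(u) + B₃(u)). Then C_ω converges to the constant function p₂ in L¹ on [0,1]: the integral ∫₀¹ ‖C_ω(u) − p₂‖ du tends to 0 as ω → +∞ (even though the pointwise limit at u = 0 is p₀ and at u = 1 is p₃, so the convergence is not uniform on [0,1]). -/
open Filter Topology MeasureTheory Set

lemma cubicBernstein_nonneg (j : ℕ) {u : ℝ} (h0 : 0 ≤ u) (h1 : u ≤ 1) :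
    0 ≤ cubicBernstein j u := by
  have h2 : (0:ℝ) ≤ 1 - u := by linarith
  unfold cubicBernstein; positivity

lemma cubicBernstein_one_pos {u : ℝ} (h0 : 0 < u) (h1 : u < 1) :
    0 < cubicBernstein 1 u := by
  have h2 : (0:ℝ) < 1 - u := by linarith
  unfold cubicBernstein
  norm_num
  positivity

lemma cubicBernstein_two_pos {u : ℝ} (h0 : 0 < u) (h1 : u < 1) :
    0 < cubicBernstein 2 u := by
  have h2 : (0:ℝ) < 1 - u := by linarith
  unfold cubicBernstein
  norm_num
  positivity

lemma cubicBernstein_continuous (j : ℕ) : Continuous (cubicBernstein j) := by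
  unfold cubicBernstein; fun_prop

lemma core_est {E : Type*} [NormedAddCommGroup E] [NormedSpace ℝ E]
    (p₀ p₁ p₂ p₃ : E) {k ω u : ℝ} (hk : 0 < k) (hω : 0 < ω) (hu : u ∈ Set.Ioo (0:ℝ) 1) :
    ‖(cubicBernstein 0 u + ω * cubicBernstein 1 u + k * ω ^ 2 * cubicBernstein 2 u +
        cubicBernstein 3 u)⁻¹ •
      ((cubicBernstein 0 u) • p₀ + (ω * cubicBernstein 1 u) • p₁ +
        (k * ω ^ 2 * cubicBernstein 2 u) • p₂ + (cubicBernstein 3 u) • p₃) - p₂‖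
    ≤ (cubicBernstein 0 u * ‖p₀ - p₂‖ + ω * cubicBernstein 1 u * ‖p₁ - p₂‖ +
        cubicBernstein 3 u * ‖p₃ - p₂‖) /
      (cubicBernstein 0 u + ω * cubicBernstein 1 u + k * ω ^ 2 * cubicBernstein 2 u +
        cubicBernstein 3 u) := by
  obtain ⟨hu0, hu1⟩ := hu
  have hB0 : 0 ≤ cubicBernstein 0 u := cubicBernstein_nonneg _ hu0.le hu1.le
  have hB1 : 0 < cubicBernstein 1 u := cubicBernstein_one_pos hu0 hu1
  have hB2 : 0 < cubicBernstein 2 u := cubicBernstein_two_pos hu0 hu1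
  have hB3 : 0 ≤ cubicBernstein 3 u := cubicBernstein_nonneg _ hu0.le hu1.le
  set B0 := cubicBernstein 0 u
  set B1 := cubicBernstein 1 u
  set B2 := cubicBernstein 2 u
  set B3 := cubicBernstein 3 u
  set D := B0 + ω * B1 + k * ω ^ 2 * B2 + B3 with hD_def
  have hD : 0 < D := by positivity
  have hsub : (B0 • p₀ + (ω * B1) • p₁ + (k * ω ^ 2 * B2) • p₂ + B3 • p₃) - D • p₂
      = B0 • (p₀ - p₂) + (ω * B1) • (p₁ - p₂) + B3 • (p₃ - p₂) := by
    rw [hD_def]; module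
  calc ‖D⁻¹ • (B0 • p₀ + (ω * B1) • p₁ + (k * ω ^ 2 * B2) • p₂ + B3 • p₃) - p₂‖
      = ‖D⁻¹ • ((B0 • p₀ + (ω * B1) • p₁ + (k * ω ^ 2 * B2) • p₂ + B3 • p₃) - D • p₂)‖ := by
        rw [smul_sub, inv_smul_smul₀ hD.ne']
    _ = D⁻¹ * ‖(B0 • p₀ + (ω * B1) • p₁ + (k * ω ^ 2 * B2) • p₂ + B3 • p₃) - D • p₂‖ := by
        rw [norm_smul, Real.norm_of_nonneg (by positivity)]
    _ ≤ D⁻¹ * (B0 * ‖p₀ - p₂‖ + ω * B1 * ‖p₁ - p₂‖ + B3 * ‖p₃ - p₂‖) := by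
        gcongr
        rw [hsub]
        refine le_trans (norm_add_le _ _) ?_
        gcongr
        · refine le_trans (norm_add_le _ _) ?_
          gcongr
          · rw [norm_smul, Real.norm_of_nonneg hB0]
          · rw [norm_smul, Real.norm_of_nonneg (by positivity)]
        · rw [norm_smul, Real.norm_of_nonneg hB3]
    _ = (B0 * ‖p₀ - p₂‖ + ω * B1 * ‖p₁ - p₂‖ + B3 * ‖p₃ - p₂‖) / D := by
        rw [div_eq_inv_mul]

/-- Fix points `p₀, p₁, p₂, p₃ ∈ ℝ²` and `k > 0`.  The rational cubic Bézier curves `C_ω` with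
weights `(1, ω, kω², 1)` converge to the constant function `p₂` in `L¹` on `[0,1]`:
`∫₀¹ ‖C_ω(u) − p₂‖ du → 0` as `ω → +∞`. -/
theorem nurbs_weights_different_order_L1_convergence
    (p₀ p₁ p₂ p₃ : EuclideanSpace ℝ (Fin 2)) (k : ℝ) (hk : 0 < k) :
    Tendsto
      (fun ω : ℝ =>
        ∫ u in (0:ℝ)..1,
          ‖(cubicBernstein 0 u + ω * cubicBernstein 1 u + k * ω ^ 2 * cubicBernstein 2 u +
              cubicBernstein 3 u)⁻¹ •
            ((cubicBernstein 0 u) • p₀ + (ω * cubicBernstein 1 u) • p₁ +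
              (k * ω ^ 2 * cubicBernstein 2 u) • p₂ + (cubicBernstein 3 u) • p₃) - p₂‖)
      atTop (𝓝 0) := by
  have hrw : ∀ f : ℝ → ℝ, (∫ u in (0:ℝ)..1, f u) = ∫ u in Set.Ioo (0:ℝ) 1, f u := by
    intro f
    rw [intervalIntegral.integral_of_le zero_le_one, integral_Ioc_eq_integral_Ioo]
  simp only [hrw]
  rw [show (𝓝 (0:ℝ)) = 𝓝 (∫ u in Set.Ioo (0:ℝ) 1, (0:ℝ)) by simp]
  apply tendsto_integral_filter_of_dominated_convergence
    (bound := fun _ => ‖p₀ - p₂‖ + ‖p₁ - p₂‖ + ‖p₃ - p₂‖)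
  · -- measurability
    filter_upwards with ω
    apply Measurable.aestronglyMeasurable
    have hm : ∀ j : ℕ, Measurable (cubicBernstein j) :=
      fun j => (cubicBernstein_continuous j).measurable
    fun_prop
  · -- bound
    filter_upwards [eventually_gt_atTop (0:ℝ)] with ω hω
    filter_upwards [ae_restrict_mem measurableSet_Ioo] with u hu
    obtain ⟨hu0, hu1⟩ := hu
    have hB0 : 0 ≤ cubicBernstein 0 u := cubicBernstein_nonneg _ hu0.le hu1.le
    have hB1 : 0 < cubicBernstein 1 u := cubicBernstein_one_pos hu0 hu1
    have hB2 : 0 < cubicBernstein 2 u := cubicBernstein_two_pos hu0 hu1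
    have hB3 : 0 ≤ cubicBernstein 3 u := cubicBernstein_nonneg _ hu0.le hu1.le
    rw [Real.norm_of_nonneg (norm_nonneg _)]
    refine le_trans (core_est p₀ p₁ p₂ p₃ hk hω ⟨hu0, hu1⟩) ?_
    set B0 := cubicBernstein 0 u
    set B1 := cubicBernstein 1 u
    set B2 := cubicBernstein 2 u
    set B3 := cubicBernstein 3 u
    have hD : 0 < B0 + ω * B1 + k * ω ^ 2 * B2 + B3 := by positivity
    rw [div_le_iff₀ hD]
    have t1 : 0 ≤ ω * B1 := by positivity
    have t2 : 0 ≤ k * ω ^ 2 * B2 := by positivity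
    have h1 : B0 ≤ B0 + ω * B1 + k * ω ^ 2 * B2 + B3 := by linarith
    have h2 : ω * B1 ≤ B0 + ω * B1 + k * ω ^ 2 * B2 + B3 := by linarith
    have h3 : B3 ≤ B0 + ω * B1 + k * ω ^ 2 * B2 + B3 := by linarith
    have n0 : (0:ℝ) ≤ ‖p₀ - p₂‖ := norm_nonneg _
    have n1 : (0:ℝ) ≤ ‖p₁ - p₂‖ := norm_nonneg _
    have n3 : (0:ℝ) ≤ ‖p₃ - p₂‖ := norm_nonneg _
    nlinarith [mul_le_mul_of_nonneg_right h1 n0, mul_le_mul_of_nonneg_right h2 n1,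
      mul_le_mul_of_nonneg_right h3 n3]
  · -- integrability of bound
    exact integrableOn_const measure_Ioo_lt_top.ne
  · -- pointwise limit
    filter_upwards [ae_restrict_mem measurableSet_Ioo] with u hu
    obtain ⟨hu0, hu1⟩ := hu
    have hB0 : 0 ≤ cubicBernstein 0 u := cubicBernstein_nonneg _ hu0.le hu1.le
    have hB1 : 0 < cubicBernstein 1 u := cubicBernstein_one_pos hu0 hu1
    have hB2 : 0 < cubicBernstein 2 u := cubicBernstein_two_pos hu0 hu1
    have hB3 : 0 ≤ cubicBernstein 3 u := cubicBernstein_nonneg _ hu0.le hu1.le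
    set B0 := cubicBernstein 0 u
    set B1 := cubicBernstein 1 u
    set B2 := cubicBernstein 2 u
    set B3 := cubicBernstein 3 u
    have hlim : Tendsto (fun ω : ℝ =>
        ((B0 * ‖p₀ - p₂‖ + B3 * ‖p₃ - p₂‖) / (k * B2)) * ω⁻¹ * ω⁻¹ +
        ((B1 * ‖p₁ - p₂‖) / (k * B2)) * ω⁻¹) atTop (𝓝 0) := by
      have h := tendsto_inv_atTop_zero (𝕜 := ℝ)
      have h2 := ((h.const_mul ((B0 * ‖p₀ - p₂‖ + B3 * ‖p₃ - p₂‖) / (k * B2))).mul h).add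
        (h.const_mul ((B1 * ‖p₁ - p₂‖) / (k * B2)))
      simpa using h2
    refine tendsto_of_tendsto_of_tendsto_of_le_of_le' (tendsto_const_nhds) hlim ?_ ?_
    · filter_upwards with ω using norm_nonneg _
    · filter_upwards [eventually_gt_atTop (0:ℝ)] with ω hω
      refine le_trans (core_est p₀ p₁ p₂ p₃ hk hω ⟨hu0, hu1⟩) ?_
      have hD : 0 < B0 + ω * B1 + k * ω ^ 2 * B2 + B3 := by positivity
      have hkB2 : 0 < k * ω ^ 2 * B2 := by positivity
      have hle : (B0 * ‖p₀ - p₂‖ + ω * B1 * ‖p₁ - p₂‖ + B3 * ‖p₃ - p₂‖) /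
          (B0 + ω * B1 + k * ω ^ 2 * B2 + B3)
          ≤ (B0 * ‖p₀ - p₂‖ + ω * B1 * ‖p₁ - p₂‖ + B3 * ‖p₃ - p₂‖) / (k * ω ^ 2 * B2) := by
        apply div_le_div_of_nonneg_left (by positivity) hkB2
        have t1 : 0 ≤ ω * B1 := by positivity
        linarith
      refine le_trans hle (le_of_eq ?_)
      field_simp
      ring
end

section
/- Let s be a finite index set and J₀ ⊆ s a nonempty subset, and let a < b be real numbers. For each j ∈ s let N_j : ℝ → ℝ be continuous on [a,b] with N_j(u) ≥ 0 for all u ∈ [a,b]. For each j ∈ s let ω_j : ℝ → ℝ satisfy ω_j(t) > 0 for all large t and ω_j(t)/t → k_j as t → +∞, with k_j > 0 for j ∈ J₀ and k_j = 0 for j ∉ J₀. Fix control points p_j ∈ ℝ², and assume that for every u ∈ [a,b] both Σ_{j ∈ s} N_j(u)·ω_j(t) > 0 (for all large t) and Σ_{j ∈ J₀} k_j·N_j(u) > 0. Define C_t(u) = (Σ_{j ∈ s} N_j(u)·ω_j(t)·p_j) / (Σ_{j ∈ s} N_j(u)·ω_j(t)) and C_∞(u) = (Σ_{j ∈ J₀}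 k_j·N_j(u)·p_j) / (Σ_{j ∈ J₀} k_j·N_j(u)). Then C_t → C_∞ in L¹: ∫_a^b ‖C_t(u) − C_∞(u)‖ du → 0 as t → +∞. -/
open Filter Topology MeasureTheory
open scoped Interval

/-- Convex-hull bound for a normalized nonnegative combination. -/
lemma nurbs_conv_bound {ι : Type*} {E : Type*} [NormedAddCommGroup E] [NormedSpace ℝ E]
    (s : Finset ι) (c : ι → ℝ) (hc : ∀ j ∈ s, 0 ≤ c j) (hsum : 0 < ∑ j ∈ s, c j)
    (p : ι → E) (M : ℝ) (hM : ∀ j ∈ s, ‖p j‖ ≤ M) :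
    ‖(∑ j ∈ s, c j)⁻¹ • ∑ j ∈ s, c j • p j‖ ≤ M := by
  rw [norm_smul, Real.norm_eq_abs, abs_inv, abs_of_pos hsum, inv_mul_le_iff₀ hsum]
  calc ‖∑ j ∈ s, c j • p j‖ ≤ ∑ j ∈ s, ‖c j • p j‖ := norm_sum_le _ _
    _ ≤ ∑ j ∈ s, c j * M := by
        refine Finset.sum_le_sum fun j hj => ?_
        rw [norm_smul, Real.norm_eq_abs, abs_of_nonneg (hc j hj)]
        exact mul_le_mul_of_nonneg_left (hM j hj) (hc j hj)
    _ = (∑ j ∈ s, c j) * M := by rw [Finset.sum_mul]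

/-- Let `s` be a finite index set, `J₀ ⊆ s` nonempty, `a < b`, and for each `j ∈ s` let `N j` be
continuous and nonnegative on `[a,b]`.  For each `j ∈ s` let `ω j : ℝ → ℝ` be eventually positive
with `ω j t / t → k j` as `t → +∞`, where `k j > 0` for `j ∈ J₀` and `k j = 0` for `j ∈ s \ J₀`.
Fix control points `p j ∈ ℝ²` and assume that for every `u ∈ [a,b]` the denominator
`Σ_{j ∈ s} N j u · ω j t` is eventually positive and `Σ_{j ∈ J₀} k j · N j u > 0`.  Then
`C_t(u) = (Σ_{j ∈ s} N j u · ω j t · p j) / (Σ_{j ∈ s} N j u · ω j t)` converges in `L¹` to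
`C_∞(u) = (Σ_{j ∈ J₀} k j · N j u · p j) / (Σ_{j ∈ J₀} k j · N j u)`:
`∫_a^b ‖C_t(u) − C_∞(u)‖ du → 0` as `t → +∞`. -/
theorem nurbs_L1_convergence_along_weight_path {ι : Type*} [DecidableEq ι]
    (s J₀ : Finset ι) (hJ₀s : J₀ ⊆ s) (hJ₀ : J₀.Nonempty)
    (a b : ℝ) (hab : a < b)
    (N : ι → ℝ → ℝ)
    (hNcont : ∀ j ∈ s, ContinuousOn (N j) (Set.Icc a b))
    (hNnonneg : ∀ j ∈ s, ∀ u ∈ Set.Icc a b, 0 ≤ N j u)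
    (ω : ι → ℝ → ℝ) (k : ι → ℝ)
    (hωpos : ∀ j ∈ s, ∀ᶠ t in atTop, 0 < ω j t)
    (hωk : ∀ j ∈ s, Tendsto (fun t : ℝ => ω j t / t) atTop (𝓝 (k j)))
    (hkpos : ∀ j ∈ J₀, 0 < k j) (hkzero : ∀ j ∈ s \ J₀, k j = 0)
    (p : ι → EuclideanSpace ℝ (Fin 2))
    (hdenpos : ∀ u ∈ Set.Icc a b, ∀ᶠ t in atTop, 0 < ∑ j ∈ s, N j u * ω j t)
    (hdenLimit : ∀ u ∈ Set.Icc a b, 0 < ∑ j ∈ J₀, k j * N j u) :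
    Tendsto
      (fun t : ℝ =>
        ∫ u in a..b,
          ‖(∑ j ∈ s, N j u * ω j t)⁻¹ • (∑ j ∈ s, (N j u * ω j t) • p j) -
            (∑ j ∈ J₀, k j * N j u)⁻¹ • (∑ j ∈ J₀, (k j * N j u) • p j)‖)
      atTop (𝓝 0) := by
  classical
  set Cinf : ℝ → EuclideanSpace ℝ (Fin 2) := fun u =>
    (∑ j ∈ J₀, k j * N j u)⁻¹ • (∑ j ∈ J₀, (k j * N j u) • p j) with hCinf
  set Ct : ℝ → ℝ → EuclideanSpace ℝ (Fin 2) := fun t u =>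
    (∑ j ∈ s, N j u * ω j t)⁻¹ • (∑ j ∈ s, (N j u * ω j t) • p j) with hCtdef
  set M : ℝ := ∑ j ∈ s, ‖p j‖ with hMdef
  have hM : ∀ j ∈ s, ‖p j‖ ≤ M :=
    fun j hj => Finset.single_le_sum (fun i _ => norm_nonneg _) hj
  have hIoc : Ι a b = Set.Ioc a b := Set.uIoc_of_le hab.le
  have hsubset : Ι a b ⊆ Set.Icc a b := by rw [hIoc]; exact Set.Ioc_subset_Icc_self
  have hωall : ∀ᶠ t in atTop, ∀ j ∈ s, 0 < ω j t := (eventually_all_finset s).2 hωpos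
  have hNpos : ∀ u ∈ Set.Icc a b, ∃ j ∈ J₀, 0 < N j u := by
    intro u hu
    have h := hdenLimit u hu
    by_contra hc
    push_neg at hc
    refine absurd (Finset.sum_nonpos fun j hj => ?_) (not_le.2 h)
    rcases lt_or_eq_of_le (hNnonneg j (hJ₀s hj) u hu) with h' | h'
    · exact absurd h' (not_lt.2 (hc j hj))
    · rw [← h', mul_zero]
  have hden : ∀ t, (∀ j ∈ s, 0 < ω j t) → ∀ u ∈ Set.Icc a b,
      0 < ∑ j ∈ s, N j u * ω j t := by
    intro t ht u hu
    obtain ⟨j₀, hj₀, hNj₀⟩ := hNpos u hu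
    exact Finset.sum_pos' (fun j hj => mul_nonneg (hNnonneg j hj u hu) (ht j hj).le)
      ⟨j₀, hJ₀s hj₀, mul_pos hNj₀ (ht j₀ (hJ₀s hj₀))⟩
  have hCinfBound : ∀ u ∈ Set.Icc a b, ‖Cinf u‖ ≤ M := fun u hu =>
    nurbs_conv_bound J₀ (fun j => k j * N j u)
      (fun j hj => mul_nonneg (hkpos j hj).le (hNnonneg j (hJ₀s hj) u hu))
      (hdenLimit u hu) p M (fun j hj => hM j (hJ₀s hj))
  have hLcont : ContinuousOn (fun u => ∑ j ∈ J₀, k j * N j u) (Set.Icc a b) :=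
    continuousOn_finset_sum _ fun j hj => continuousOn_const.mul (hNcont j (hJ₀s hj))
  have hCinfCont : ContinuousOn Cinf (Set.Icc a b) := by
    refine ContinuousOn.smul (hLcont.inv₀ fun u hu => (hdenLimit u hu).ne') ?_
    exact continuousOn_finset_sum _ fun j hj =>
      (continuousOn_const.mul (hNcont j (hJ₀s hj))).smul continuousOn_const
  -- measurability
  have hF_meas : ∀ᶠ t in atTop,
      AEStronglyMeasurable (fun u => ‖Ct t u - Cinf u‖) (volume.restrict (Ι a b)) := by
    filter_upwards [hωall] with t ht
    have hDcont : ContinuousOn (fun u => ∑ j ∈ s, N j u * ω j t) (Set.Icc a b) :=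
      continuousOn_finset_sum _ fun j hj => (hNcont j hj).mul continuousOn_const
    have hCtCont : ContinuousOn (Ct t) (Set.Icc a b) := by
      refine ContinuousOn.smul (hDcont.inv₀ fun u hu => (hden t ht u hu).ne') ?_
      exact continuousOn_finset_sum _ fun j hj =>
        ((hNcont j hj).mul continuousOn_const).smul continuousOn_const
    exact (((hCtCont.sub hCinfCont).norm).mono hsubset).aestronglyMeasurable
      measurableSet_uIoc
  -- bound
  have h_bound : ∀ᶠ t in atTop, ∀ᵐ u : ℝ, u ∈ Ι a b → ‖‖Ct t u - Cinf u‖‖ ≤ 2 * M := by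
    filter_upwards [hωall] with t ht
    refine ae_of_all _ fun u hu => ?_
    have hu' : u ∈ Set.Icc a b := hsubset hu
    have h1 : ‖Ct t u‖ ≤ M :=
      nurbs_conv_bound s (fun j => N j u * ω j t)
        (fun j hj => mul_nonneg (hNnonneg j hj u hu') (ht j hj).le)
        (hden t ht u hu') p M hM
    calc ‖‖Ct t u - Cinf u‖‖ = ‖Ct t u - Cinf u‖ := norm_norm _
      _ ≤ ‖Ct t u‖ + ‖Cinf u‖ := norm_sub_le _ _
      _ ≤ M + M := add_le_add h1 (hCinfBound u hu')
      _ = 2 * M := by ring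
  -- pointwise limit
  have h_lim : ∀ᵐ u : ℝ, u ∈ Ι a b →
      Tendsto (fun t => ‖Ct t u - Cinf u‖) atTop (𝓝 0) := by
    refine ae_of_all _ fun u hu => ?_
    have hu' : u ∈ Set.Icc a b := hsubset hu
    set L : ℝ := ∑ j ∈ J₀, k j * N j u with hLdef
    have hL : 0 < L := hdenLimit u hu'
    have hsum_eq : ∑ j ∈ s, N j u * k j = L := by
      rw [hLdef, ← Finset.sum_subset hJ₀s
        (fun j hj hj' => by rw [hkzero j (Finset.mem_sdiff.2 ⟨hj, hj'⟩), mul_zero])]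
      exact Finset.sum_congr rfl fun j _ => mul_comm _ _
    have hnum_eq : (∑ j ∈ s, (N j u * k j) • p j) = ∑ j ∈ J₀, (k j * N j u) • p j := by
      rw [← Finset.sum_subset hJ₀s
        (fun j hj hj' => by rw [hkzero j (Finset.mem_sdiff.2 ⟨hj, hj'⟩), mul_zero, zero_smul])]
      exact Finset.sum_congr rfl fun j _ => by rw [mul_comm]
    have hden' : Tendsto (fun t => ∑ j ∈ s, N j u * (ω j t / t)) atTop (𝓝 L) := by
      rw [← hsum_eq]
      exact tendsto_finset_sum _ fun j hj => tendsto_const_nhds.mul (hωk j hj)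
    have hnum' : Tendsto (fun t => ∑ j ∈ s, (N j u * (ω j t / t)) • p j) atTop
        (𝓝 (∑ j ∈ J₀, (k j * N j u) • p j)) := by
      rw [← hnum_eq]
      exact tendsto_finset_sum _ fun j hj =>
        (tendsto_const_nhds.mul (hωk j hj)).smul tendsto_const_nhds
    have hG : Tendsto (fun t => (∑ j ∈ s, N j u * (ω j t / t))⁻¹ •
        ∑ j ∈ s, (N j u * (ω j t / t)) • p j) atTop (𝓝 (Cinf u)) :=
      (hden'.inv₀ hL.ne').smul hnum'
    have heq : ∀ᶠ t in atTop, (∑ j ∈ s, N j u * (ω j t / t))⁻¹ •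
        (∑ j ∈ s, (N j u * (ω j t / t)) • p j) = Ct t u := by
      filter_upwards [eventually_ne_atTop (0 : ℝ)] with t ht
      have h1 : ∀ j, N j u * (ω j t / t) = t⁻¹ * (N j u * ω j t) := fun j => by
        rw [div_eq_mul_inv]; ring
      simp only [h1]
      rw [← Finset.mul_sum]
      have h2 : (∑ j ∈ s, (t⁻¹ * (N j u * ω j t)) • p j) =
          t⁻¹ • ∑ j ∈ s, (N j u * ω j t) • p j := by
        rw [Finset.smul_sum]
        exact Finset.sum_congr rfl fun j _ => (smul_smul _ _ _).symm
      rw [h2, mul_inv, inv_inv, smul_smul]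
      have h3 : t * (∑ i ∈ s, N i u * ω i t)⁻¹ * t⁻¹ = (∑ i ∈ s, N i u * ω i t)⁻¹ := by
        rw [mul_comm t, mul_assoc, mul_inv_cancel₀ ht, mul_one]
      rw [h3]
    have hCtlim : Tendsto (fun t => Ct t u) atTop (𝓝 (Cinf u)) := hG.congr' heq
    have := (hCtlim.sub (tendsto_const_nhds (x := Cinf u))).norm
    simpa using this
  have key := intervalIntegral.tendsto_integral_filter_of_dominated_convergence
    (μ := volume) (F := fun t u => ‖Ct t u - Cinf u‖) (f := fun _ => (0 : ℝ))
    (fun _ => 2 * M) hF_meas h_bound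
    (intervalIntegrable_const : IntervalIntegrable (fun _ => 2 * M) volume a b) h_lim
  simpa using key
end
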